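/- arXiv:2009.06111 — 3 statements merged into one kernel-verified Lean document; each statement's English description precedes it below -/
import Mathlib

section
/- Let $\theta \in \mathbb{R}^d$, let $\delta_1,\dots,\delta_d \in (0,1)$, and let $A:\mathbb{R}\to\mathbb{R}$ be convex and continuous. For $j=1,\dots,d$ let $\mathcal{Q}_j(\delta_j)$ denote the set of Borel probability measures on $[0,(1-\delta_j)^{-1}]$ with mean $1$. Then $\sup\{\mathbb{E}_{\mathbb{Q}_1\otimes\cdots\otimes\mathbb{Q}_d}[A(\theta^\top\xi)] : \mathbb{Q}_j \in \mathcal{Q}_j(\delta_j)\} = \mathbb{E}_{\mathbb{Q}_1^\star\otimes\cdots\otimes\mathbb{Q}_d^\star}[A(\theta^\top\xi)]$, where $\mathbb{Q}_j^\star$ places mass $\delta_j$ at $0$ and mass $1-\delta_j$ at $(1-\delta_j)^{-1}$. -/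
open MeasureTheory Set

/-- The scaled Bernoulli distribution placing mass `δ` at `0` and mass `1-δ` at `(1-δ)⁻¹`. -/
noncomputable def scaledBernoulli (δ : ℝ) : Measure ℝ :=
  ENNReal.ofReal δ • Measure.dirac 0 + ENNReal.ofReal (1 - δ) • Measure.dirac (1 - δ)⁻¹

namespace DropoutAux

lemma integrable_dirac' {f : ℝ → ℝ} (hf : Measurable f) (a : ℝ) :
    Integrable f (Measure.dirac a) :=
  ⟨hf.aestronglyMeasurable, by simp [HasFiniteIntegral, lintegral_dirac]⟩

lemma isProb_sb {δ : ℝ} (hδ : δ ∈ Ioo (0 : ℝ) 1) :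
    IsProbabilityMeasure (scaledBernoulli δ) := by
  constructor
  simp only [scaledBernoulli, Measure.add_apply, Measure.smul_apply, smul_eq_mul,
    Measure.dirac_apply_of_mem (mem_univ _), mul_one]
  rw [← ENNReal.ofReal_add hδ.1.le (by linarith [hδ.2])]
  norm_num

lemma integral_sb {δ : ℝ} (hδ : δ ∈ Ioo (0 : ℝ) 1) (f : ℝ → ℝ) (hf : Measurable f) :
    ∫ x, f x ∂(scaledBernoulli δ) = δ * f 0 + (1 - δ) * f (1 - δ)⁻¹ := by
  rw [scaledBernoulli, integral_add_measure, integral_smul_measure, integral_smul_measure,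
    integral_dirac, integral_dirac]
  · rw [ENNReal.toReal_ofReal hδ.1.le, ENNReal.toReal_ofReal (by linarith [hδ.2])]
    simp [smul_eq_mul]
  · exact (integrable_dirac' hf 0).smul_measure ENNReal.ofReal_ne_top
  · exact (integrable_dirac' hf _).smul_measure ENNReal.ofReal_ne_top

lemma sb_supp {δ : ℝ} (hδ : δ ∈ Ioo (0 : ℝ) 1) :
    ∀ᵐ x ∂(scaledBernoulli δ), x ∈ Icc (0 : ℝ) (1 - δ)⁻¹ := by
  have h1δ : (0:ℝ) < 1 - δ := by linarith [hδ.2]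
  have h1 : (0:ℝ) ≤ (1 - δ)⁻¹ := by positivity
  rw [ae_iff]
  have hsub : {x : ℝ | ¬ x ∈ Icc (0:ℝ) (1 - δ)⁻¹} ⊆ ({0}ᶜ ∩ {(1 - δ)⁻¹}ᶜ : Set ℝ) := by
    intro x hx
    simp only [mem_setOf_eq, mem_Icc, not_and_or, not_le] at hx
    refine ⟨?_, ?_⟩ <;> simp only [mem_compl_iff, mem_singleton_iff] <;> rintro rfl <;>
      rcases hx with hx | hx <;> linarith
  refine measure_mono_null hsub ?_
  simp only [scaledBernoulli, Measure.add_apply, Measure.smul_apply, smul_eq_mul]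
  rw [Measure.dirac_apply' _ (by measurability), Measure.dirac_apply' _ (by measurability)]
  simp [indicator]

lemma sb_mean {δ : ℝ} (hδ : δ ∈ Ioo (0 : ℝ) 1) :
    ∫ x, x ∂(scaledBernoulli δ) = 1 := by
  rw [integral_sb hδ (fun x => x) (measurable_id)]
  rw [mul_inv_cancel₀ (by linarith [hδ.2] : (1:ℝ) - δ ≠ 0)]
  ring

lemma integrable_of_bound {α : Type*} [MeasurableSpace α] (μ : Measure α) [IsFiniteMeasure μ]
    (g : α → ℝ) (hg : AEStronglyMeasurable g μ) (C : ℝ) (h : ∀ᵐ z ∂μ, ‖g z‖ ≤ C) :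
    Integrable g μ :=
  Integrable.mono' (integrable_const C) hg h

lemma onedim {δ : ℝ} (hδ : δ ∈ Ioo (0 : ℝ) 1) (f : ℝ → ℝ) (hf : ConvexOn ℝ univ f)
    (Q : Measure ℝ) [IsProbabilityMeasure Q]
    (hsupp : ∀ᵐ x ∂Q, x ∈ Icc (0 : ℝ) (1 - δ)⁻¹) (hmean : ∫ x, x ∂Q = 1)
    (hint : Integrable f Q) :
    ∫ x, f x ∂Q ≤ δ * f 0 + (1 - δ) * f (1 - δ)⁻¹ := by
  have h1δ : (0:ℝ) < 1 - δ := by linarith [hδ.2]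
  set M : ℝ := (1 - δ)⁻¹ with hM
  have hM0 : 0 < M := by positivity
  have hxint : Integrable (fun x : ℝ => x) Q := by
    by_contra h
    rw [integral_undef h] at hmean; norm_num at hmean
  have chord : ∀ x ∈ Icc (0:ℝ) M, f x ≤ f 0 + (f M - f 0) / M * x := by
    intro x hx
    have ht0 : 0 ≤ x / M := div_nonneg hx.1 hM0.le
    have ht1 : x / M ≤ 1 := (div_le_one hM0).2 hx.2
    have h2 := hf.2 (mem_univ (0:ℝ)) (mem_univ M) (by linarith : (0:ℝ) ≤ 1 - x / M) ht0 (by ring)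
    simp only [smul_eq_mul, mul_zero, zero_add] at h2
    rw [div_mul_cancel₀ x hM0.ne'] at h2
    have : (1 - x / M) * f 0 + x / M * f M = f 0 + (f M - f 0) / M * x := by
      field_simp; ring
    linarith [h2, this.le, this.ge]
  have hle : ∀ᵐ x ∂Q, f x ≤ f 0 + (f M - f 0) / M * x := hsupp.mono fun x hx => chord x hx
  have h2 : Integrable (fun x : ℝ => f 0 + (f M - f 0) / M * x) Q :=
    (integrable_const _).add (hxint.const_mul _)
  have := integral_mono_ae hint h2 hle
  rw [integral_add (integrable_const _) (hxint.const_mul _), integral_const,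
    integral_const_mul, hmean] at this
  simp only [measure_univ, probReal_univ, ENNReal.toReal_one, smul_eq_mul, one_mul, mul_one] at this
  have hMrw : (f M - f 0) / M = (f M - f 0) * (1 - δ) := by
    rw [div_eq_mul_inv, inv_inv]
  rw [hMrw] at this
  nlinarith [this]

lemma ae_prod_fst {α β : Type*} [MeasurableSpace α] [MeasurableSpace β]
    (μ : Measure α) (ν : Measure β) [SigmaFinite ν] {s : Set α}
    (h : ∀ᵐ x ∂μ, x ∈ s) : ∀ᵐ p ∂μ.prod ν, p.1 ∈ s := by
  rw [ae_iff] at h ⊢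
  have he : {p : α × β | ¬ p.1 ∈ s} = {x | ¬ x ∈ s} ×ˢ (univ : Set β) := by
    ext ⟨x, y⟩; simp
  rw [he, Measure.prod_prod, h, zero_mul]

lemma ae_prod_snd {α β : Type*} [MeasurableSpace α] [MeasurableSpace β]
    (μ : Measure α) (ν : Measure β) [SigmaFinite ν] {t : Set β}
    (h : ∀ᵐ y ∂ν, y ∈ t) : ∀ᵐ p ∂μ.prod ν, p.2 ∈ t := by
  rw [ae_iff] at h ⊢
  have he : {p : α × β | ¬ p.2 ∈ t} = (univ : Set α) ×ˢ {y | ¬ y ∈ t} := by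
    ext ⟨x, y⟩; simp
  rw [he, Measure.prod_prod, h, mul_zero]

lemma ae_pi_mem {d : ℕ} (Q : Fin d → Measure ℝ) [∀ j, IsProbabilityMeasure (Q j)]
    (S : Fin d → Set ℝ) (hS : ∀ j, MeasurableSet (S j))
    (h : ∀ j, ∀ᵐ x ∂Q j, x ∈ S j) :
    ∀ᵐ ξ ∂Measure.pi Q, ∀ j, ξ j ∈ S j := by
  have h1 : ∀ j, Q j (S j) = 1 := fun j =>
    (prob_compl_eq_zero_iff (hS j)).1 (by rw [Set.compl_def]; exact ae_iff.mp (h j))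
  have h2 : Measure.pi Q (Set.pi univ S) = 1 := by
    rw [Measure.pi_pi]
    simp [h1]
  have h3 : Measure.pi Q (Set.pi univ S)ᶜ = 0 :=
    (prob_compl_eq_zero_iff (MeasurableSet.univ_pi hS)).2 h2
  rw [ae_iff]
  refine measure_mono_null ?_ h3
  intro ξ hξ
  simp only [mem_setOf_eq] at hξ
  intro hmem
  exact hξ fun j => hmem j (mem_univ j)

lemma repr {n : ℕ} (θ : Fin (n + 1) → ℝ) (A : ℝ → ℝ)
    (S : Fin (n + 1) → Measure ℝ) [∀ j, SigmaFinite (S j)] (i : Fin (n + 1)) :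
    ∫ ξ, A (∑ j, θ j * ξ j) ∂(Measure.pi S) =
      ∫ p : ℝ × (Fin n → ℝ), A (θ i * p.1 + ∑ j, θ (i.succAbove j) * p.2 j)
        ∂((S i).prod (Measure.pi fun j => S (i.succAbove j))) := by
  have h := ((measurePreserving_piFinSuccAbove S i).symm
      (MeasurableEquiv.piFinSuccAbove (fun _ => ℝ) i))
  rw [← h.integral_comp
      (MeasurableEquiv.piFinSuccAbove (fun _ => ℝ) i).symm.measurableEmbedding
      (fun ξ => A (∑ j, θ j * ξ j))]
  refine integral_congr_ae (Filter.Eventually.of_forall fun p => ?_)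
  simp only []
  congr 1
  rw [Fin.sum_univ_succAbove (fun j => θ j * ((MeasurableEquiv.piFinSuccAbove (fun _ => ℝ) i).symm p) j) i]
  simp [MeasurableEquiv.piFinSuccAbove, MeasurableEquiv.symm_mk, MeasurableEquiv.coe_mk, Fin.insertNthEquiv]
lemma swap_step {d : ℕ} (θ : Fin d → ℝ) (δ : Fin d → ℝ) (hδ : ∀ j, δ j ∈ Ioo (0:ℝ) 1)
    (A : ℝ → ℝ) (hconv : ConvexOn ℝ univ A) (hcont : Continuous A)
    (R : Fin d → Measure ℝ) (hprob : ∀ j, IsProbabilityMeasure (R j))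
    (hsupp : ∀ j, ∀ᵐ x ∂(R j), x ∈ Icc (0:ℝ) (1 - δ j)⁻¹)
    (hmean : ∀ j, ∫ x, x ∂(R j) = 1) (i : Fin d) :
    ∫ ξ, A (∑ j, θ j * ξ j) ∂(Measure.pi R) ≤
      ∫ ξ, A (∑ j, θ j * ξ j) ∂(Measure.pi (Function.update R i (scaledBernoulli (δ i)))) := by
  obtain ⟨n, rfl⟩ : ∃ n, d = n + 1 := ⟨d - 1, by have := i.pos; omega⟩
  haveI : ∀ j, IsProbabilityMeasure (R j) := hprob
  have hδi := hδ i
  haveI hsbP : IsProbabilityMeasure (scaledBernoulli (δ i)) := isProb_sb hδi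
  haveI hR'P : ∀ j, IsProbabilityMeasure (Function.update R i (scaledBernoulli (δ i)) j) := by
    intro j
    rcases eq_or_ne j i with rfl | hji
    · rw [Function.update_self]; exact hsbP
    · rw [Function.update_of_ne hji]; exact hprob j
  set ν := Measure.pi (fun j : Fin n => R (i.succAbove j)) with hνdef
  set f : ℝ × (Fin n → ℝ) → ℝ :=
    fun p => A (θ i * p.1 + ∑ j, θ (i.succAbove j) * p.2 j) with hfdef
  have hfc : Continuous f := by
    apply hcont.comp
    fun_prop
  have hM0 : ∀ j : Fin (n+1), (0:ℝ) ≤ (1 - δ j)⁻¹ := fun j => by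
    have h := (hδ j).2; have : (0:ℝ) < 1 - δ j := by linarith
    positivity
  obtain ⟨C, hC⟩ := (isCompact_Icc
      (a := -(|θ i| * (1 - δ i)⁻¹ + ∑ j, |θ (i.succAbove j)| * (1 - δ (i.succAbove j))⁻¹))
      (b := |θ i| * (1 - δ i)⁻¹ + ∑ j, |θ (i.succAbove j)| * (1 - δ (i.succAbove j))⁻¹)
      ).exists_bound_of_continuousOn hcont.continuousOn
  have hbound : ∀ x ∈ Icc (0:ℝ) (1 - δ i)⁻¹, ∀ y : Fin n → ℝ,
      (∀ j, y j ∈ Icc (0:ℝ) (1 - δ (i.succAbove j))⁻¹) → ‖f (x, y)‖ ≤ C := by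
    intro x hx y hy
    apply hC
    rw [mem_Icc, ← abs_le]
    have h1 : |θ i * x| ≤ |θ i| * (1 - δ i)⁻¹ := by
      rw [abs_mul]
      exact mul_le_mul_of_nonneg_left (by rw [abs_of_nonneg hx.1]; exact hx.2) (abs_nonneg _)
    have h2 : |∑ j, θ (i.succAbove j) * y j| ≤
        ∑ j, |θ (i.succAbove j)| * (1 - δ (i.succAbove j))⁻¹ := by
      refine (Finset.abs_sum_le_sum_abs _ _).trans (Finset.sum_le_sum fun j _ => ?_)
      rw [abs_mul]
      exact mul_le_mul_of_nonneg_left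
        (by rw [abs_of_nonneg (hy j).1]; exact (hy j).2) (abs_nonneg _)
    exact (abs_add_le _ _).trans (add_le_add h1 h2)
  have hyν : ∀ᵐ y ∂ν, y ∈ {y : Fin n → ℝ | ∀ j, y j ∈ Icc (0:ℝ) (1 - δ (i.succAbove j))⁻¹} :=
    ae_pi_mem _ _ (fun j => measurableSet_Icc) (fun j => hsupp (i.succAbove j))
  have hint : ∀ (μ : Measure ℝ), IsProbabilityMeasure μ →
      (∀ᵐ x ∂μ, x ∈ Icc (0:ℝ) (1 - δ i)⁻¹) → Integrable f (μ.prod ν) := by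
    intro μ hμ hμs
    haveI := hμ
    have h1 : ∀ᵐ p : ℝ × (Fin n → ℝ) ∂μ.prod ν, p.1 ∈ Icc (0:ℝ) (1 - δ i)⁻¹ :=
      ae_prod_fst μ ν hμs
    have h2 := ae_prod_snd μ ν hyν
    refine integrable_of_bound _ f hfc.aestronglyMeasurable C ((h1.and h2).mono ?_)
    rintro ⟨x, y⟩ ⟨hx, hy⟩
    exact hbound x hx y hy
  have hintR := hint (R i) (hprob i) (hsupp i)
  have hintS := hint (scaledBernoulli (δ i)) hsbP (sb_supp hδi)
  have hmono : ∀ y : Fin n → ℝ,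
      ∫ x, f (x, y) ∂(R i) ≤ ∫ x, f (x, y) ∂(scaledBernoulli (δ i)) := by
    intro y
    have hconv' : ConvexOn ℝ univ
        (fun x : ℝ => A (θ i * x + ∑ j, θ (i.succAbove j) * y j)) := by
      refine ⟨convex_univ, fun x _ z _ a b ha hb hab => ?_⟩
      have h2 := hconv.2 (mem_univ (θ i * x + ∑ j, θ (i.succAbove j) * y j))
        (mem_univ (θ i * z + ∑ j, θ (i.succAbove j) * y j)) ha hb hab
      simp only [smul_eq_mul] at h2 ⊢
      have he : θ i * (a * x + b * z) + ∑ j, θ (i.succAbove j) * y j =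
          a * (θ i * x + ∑ j, θ (i.succAbove j) * y j) +
            b * (θ i * z + ∑ j, θ (i.succAbove j) * y j) := by
        have h3 : a * (∑ j, θ (i.succAbove j) * y j) + b * (∑ j, θ (i.succAbove j) * y j)
            = ∑ j, θ (i.succAbove j) * y j := by
          rw [← add_mul, hab, one_mul]
        nlinarith [h3]
      rw [he]
      exact h2
    have hcont' : Continuous (fun x : ℝ => A (θ i * x + ∑ j, θ (i.succAbove j) * y j)) :=
      hcont.comp (by fun_prop)
    obtain ⟨Cy, hCy⟩ := (isCompact_Icc (a := (0:ℝ)) (b := (1 - δ i)⁻¹)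
      ).exists_bound_of_continuousOn hcont'.continuousOn
    have hinty : Integrable (fun x : ℝ => A (θ i * x + ∑ j, θ (i.succAbove j) * y j)) (R i) :=
      integrable_of_bound _ _ hcont'.aestronglyMeasurable Cy
        ((hsupp i).mono fun x hx => hCy x hx)
    have h1 := onedim hδi _ hconv' (R i) (hsupp i) (hmean i) hinty
    have h2 : ∫ x, f (x, y) ∂(scaledBernoulli (δ i)) =
        δ i * A (θ i * 0 + ∑ j, θ (i.succAbove j) * y j) +
          (1 - δ i) * A (θ i * (1 - δ i)⁻¹ + ∑ j, θ (i.succAbove j) * y j) :=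
      integral_sb hδi (fun x => A (θ i * x + ∑ j, θ (i.succAbove j) * y j))
        hcont'.measurable
    rw [h2]
    exact h1
  have hR'prod : ((Function.update R i (scaledBernoulli (δ i))) i).prod
      (Measure.pi fun j => Function.update R i (scaledBernoulli (δ i)) (i.succAbove j)) =
      (scaledBernoulli (δ i)).prod ν := by
    have h4 : (fun j : Fin n => Function.update R i (scaledBernoulli (δ i)) (i.succAbove j)) =
        fun j => R (i.succAbove j) :=
      funext fun j => Function.update_of_ne (Fin.succAbove_ne i j) _ _
    rw [Function.update_self, h4]
  calc ∫ ξ, A (∑ j, θ j * ξ j) ∂(Measure.pi R)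
      = ∫ p, f p ∂((R i).prod ν) := repr θ A R i
    _ = ∫ y, ∫ x, f (x, y) ∂(R i) ∂ν := integral_prod_symm f hintR
    _ ≤ ∫ y, ∫ x, f (x, y) ∂(scaledBernoulli (δ i)) ∂ν :=
        integral_mono hintR.integral_prod_right hintS.integral_prod_right hmono
    _ = ∫ p, f p ∂((scaledBernoulli (δ i)).prod ν) := (integral_prod_symm f hintS).symm
    _ = ∫ ξ, A (∑ j, θ j * ξ j)
          ∂(Measure.pi (Function.update R i (scaledBernoulli (δ i)))) := by
        rw [repr θ A (Function.update R i (scaledBernoulli (δ i))) i, hR'prod]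

lemma main_le {d : ℕ} (θ : Fin d → ℝ) (δ : Fin d → ℝ) (hδ : ∀ j, δ j ∈ Ioo (0:ℝ) 1)
    (A : ℝ → ℝ) (hconv : ConvexOn ℝ univ A) (hcont : Continuous A)
    (Q : Fin d → Measure ℝ) (hprob : ∀ j, IsProbabilityMeasure (Q j))
    (hsupp : ∀ j, ∀ᵐ x ∂Q j, x ∈ Icc (0:ℝ) (1 - δ j)⁻¹)
    (hmean : ∀ j, ∫ x, x ∂Q j = 1) :
    ∫ ξ, A (∑ j, θ j * ξ j) ∂(Measure.pi Q) ≤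
      ∫ ξ, A (∑ j, θ j * ξ j) ∂(Measure.pi fun j => scaledBernoulli (δ j)) := by
  have key : ∀ s : Finset (Fin d),
      ∫ ξ, A (∑ j, θ j * ξ j) ∂(Measure.pi Q) ≤
        ∫ ξ, A (∑ j, θ j * ξ j)
          ∂(Measure.pi fun j => if j ∈ s then scaledBernoulli (δ j) else Q j) := by
    intro s
    induction s using Finset.induction_on with
    | empty => simp
    | @insert i s hi ih =>
      refine ih.trans ?_
      have hupd : (fun j => if j ∈ insert i s then scaledBernoulli (δ j) else Q j) =
          Function.update (fun j => if j ∈ s then scaledBernoulli (δ j) else Q j) i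
            (scaledBernoulli (δ i)) := by
        funext j
        rcases eq_or_ne j i with rfl | hji
        · rw [Function.update_self, if_pos (Finset.mem_insert_self j s)]
        · rw [Function.update_of_ne hji]
          by_cases hjs : j ∈ s
          · rw [if_pos (Finset.mem_insert_of_mem hjs), if_pos hjs]
          · rw [if_neg (fun h => (Finset.mem_insert.mp h).elim hji hjs), if_neg hjs]
      rw [hupd]
      refine swap_step θ δ hδ A hconv hcont _ ?_ ?_ ?_ i
      · intro j
        by_cases hjs : j ∈ s
        · simp only [if_pos hjs]; exact isProb_sb (hδ j)
        · simp only [if_neg hjs]; exact hprob j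
      · intro j
        by_cases hjs : j ∈ s
        · simp only [if_pos hjs]; exact sb_supp (hδ j)
        · simp only [if_neg hjs]; exact hsupp j
      · intro j
        by_cases hjs : j ∈ s
        · simp only [if_pos hjs]; exact sb_mean (hδ j)
        · simp only [if_neg hjs]; exact hmean j
  simpa using key Finset.univ

end DropoutAux

open DropoutAux in
theorem dropout_worst_case_product
    (d : ℕ) (θ : Fin d → ℝ) (δ : Fin d → ℝ) (hδ : ∀ j, δ j ∈ Ioo (0 : ℝ) 1)
    (A : ℝ → ℝ) (hconv : ConvexOn ℝ univ A) (hcont : Continuous A) :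
    IsGreatest
      {r : ℝ | ∃ Q : Fin d → Measure ℝ,
        (∀ j, IsProbabilityMeasure (Q j)) ∧
        (∀ j, ∀ᵐ x ∂(Q j), x ∈ Icc (0 : ℝ) (1 - δ j)⁻¹) ∧
        (∀ j, (∫ x, x ∂(Q j)) = 1) ∧
        r = ∫ ξ, A (∑ j, θ j * ξ j) ∂(Measure.pi Q)}
      (∫ ξ, A (∑ j, θ j * ξ j) ∂(Measure.pi fun j => scaledBernoulli (δ j))) := by
  constructor
  · exact ⟨fun j => scaledBernoulli (δ j), fun j => isProb_sb (hδ j),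
      fun j => sb_supp (hδ j), fun j => sb_mean (hδ j), rfl⟩
  · rintro r ⟨Q, h1, h2, h3, rfl⟩
    exact main_le θ δ hδ A hconv hcont Q h1 h2 h3
end

section
/- Let $\delta\in(0,1)$, $\beta \in \mathbb{R}^d$, and let $x_1,\dots,x_n \in \mathbb{R}^d$, $y_1,\dots,y_n \in \mathbb{R}$. Let $\xi$ be a random vector with independent coordinates distributed as $(1-\delta)^{-1}\times\mathrm{Bernoulli}(1-\delta)$. Then $\frac{1}{n}\sum_{i=1}^n \mathbb{E}\big[(\beta^\top(x_i\odot\xi) - y_i)^2\big] = \frac{1}{n}\big[(\mathbf{Y}-\mathbf{X}\beta)^\top(\mathbf{Y}-\mathbf{X}\beta) + \frac{\delta}{1-\delta}\beta^\top\mathrm{diag}(\mathbf{X}^\top\mathbf{X})\beta\big]$, where $\mathbf{X}$ has rows $x_i^\top$ and $\mathbf{Y} = (y_1,\dots,y_n)^\top$. -/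
open MeasureTheory Matrix Set

lemma sB_integrable {δ : ℝ} (f : ℝ → ℝ) : Integrable f (scaledBernoulli δ) := by
  have h0 : Integrable f (Measure.dirac (0:ℝ)) :=
    (integrable_const (f 0)).congr (MeasureTheory.ae_eq_dirac f).symm
  have h1 : Integrable f (Measure.dirac ((1-δ)⁻¹)) :=
    (integrable_const (f (1-δ)⁻¹)).congr (MeasureTheory.ae_eq_dirac f).symm
  exact (h0.smul_measure ENNReal.ofReal_ne_top).add_measure
    (h1.smul_measure ENNReal.ofReal_ne_top)

lemma sB_integral {δ : ℝ} (hδ : δ ∈ Ioo (0:ℝ) 1) (f : ℝ → ℝ) :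
    ∫ x, f x ∂(scaledBernoulli δ) = δ * f 0 + (1-δ) * f (1-δ)⁻¹ := by
  have h0 : Integrable f (Measure.dirac (0:ℝ)) :=
    (integrable_const (f 0)).congr (MeasureTheory.ae_eq_dirac f).symm
  have h1 : Integrable f (Measure.dirac ((1-δ)⁻¹)) :=
    (integrable_const (f (1-δ)⁻¹)).congr (MeasureTheory.ae_eq_dirac f).symm
  rw [scaledBernoulli, integral_add_measure (h0.smul_measure ENNReal.ofReal_ne_top)
      (h1.smul_measure ENNReal.ofReal_ne_top),
    integral_smul_measure, integral_smul_measure, integral_dirac, integral_dirac,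
    ENNReal.toReal_ofReal hδ.1.le, ENNReal.toReal_ofReal (by linarith [hδ.2] : (0:ℝ) ≤ 1 - δ)]
  simp [smul_eq_mul]

lemma sB_prob {δ : ℝ} (hδ : δ ∈ Ioo (0:ℝ) 1) : IsProbabilityMeasure (scaledBernoulli δ) := by
  constructor
  simp only [scaledBernoulli, Measure.add_apply, Measure.smul_apply, Measure.dirac_apply_of_mem
    (Set.mem_univ _), smul_eq_mul, mul_one]
  rw [← ENNReal.ofReal_add hδ.1.le (by linarith [hδ.2])]
  norm_num

instance sB_finite {δ : ℝ} : IsFiniteMeasure (scaledBernoulli δ) := by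
  constructor
  simp only [scaledBernoulli, Measure.add_apply, Measure.smul_apply, smul_eq_mul,
    Measure.dirac_apply_of_mem (Set.mem_univ _), mul_one]
  exact ENNReal.add_lt_top.2 ⟨ENNReal.ofReal_lt_top, ENNReal.ofReal_lt_top⟩

lemma prod_if_rep {d : ℕ} (j : Fin d) (ξ : Fin d → ℝ) :
    (∏ l, (if l = j then ξ l else 1)) = ξ j := by
  rw [Finset.prod_ite_eq' Finset.univ j ξ, if_pos (Finset.mem_univ j)]

lemma pi_int2 {d : ℕ} {δ : ℝ} (j k : Fin d) :
    Integrable (fun ξ : Fin d → ℝ => ξ j * ξ k) (Measure.pi fun _ => scaledBernoulli δ)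
    ∧ Integrable (fun ξ : Fin d → ℝ => ξ j) (Measure.pi fun _ => scaledBernoulli δ) := by
  letI : MeasureSpace ℝ := ⟨scaledBernoulli δ⟩
  have hvol : (Measure.pi fun _ : Fin d => scaledBernoulli δ)
      = (volume : Measure (Fin d → ℝ)) := rfl
  rw [hvol]
  haveI : SigmaFinite (volume : Measure ℝ) :=
    @IsFiniteMeasure.toSigmaFinite _ _ _ (inferInstanceAs (IsFiniteMeasure (scaledBernoulli δ)))
  constructor
  · have : (fun ξ : Fin d → ℝ => ξ j * ξ k)
        = fun ξ => ∏ l, ((if l = j then ξ l else 1) * (if l = k then ξ l else 1)) := by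
      funext ξ
      rw [Finset.prod_mul_distrib, prod_if_rep, prod_if_rep]
    rw [this]
    exact Integrable.fintype_prod
      (f := fun l t => (if l = j then t else 1) * (if l = k then t else 1))
      (fun l => sB_integrable _)
  · have : (fun ξ : Fin d → ℝ => ξ j)
        = fun ξ => ∏ l, (if l = j then ξ l else 1) := by
      funext ξ; rw [prod_if_rep]
    rw [this]
    exact Integrable.fintype_prod (f := fun l t => (if l = j then t else 1))
      (fun l => sB_integrable _)

lemma pi_moment1 {d : ℕ} {δ : ℝ} (hδ : δ ∈ Ioo (0:ℝ) 1) (j : Fin d) :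
    ∫ ξ : Fin d → ℝ, ξ j ∂(Measure.pi fun _ => scaledBernoulli δ) = 1 := by
  letI : MeasureSpace ℝ := ⟨scaledBernoulli δ⟩
  haveI : SigmaFinite (volume : Measure ℝ) :=
    @IsFiniteMeasure.toSigmaFinite _ _ _ (inferInstanceAs (IsFiniteMeasure (scaledBernoulli δ)))
  have hvol : (Measure.pi fun _ : Fin d => scaledBernoulli δ)
      = (volume : Measure (Fin d → ℝ)) := rfl
  rw [hvol]
  have h : (fun ξ : Fin d → ℝ => ξ j) = fun ξ => ∏ l, (if l = j then ξ l else 1) := by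
    funext ξ; rw [prod_if_rep]
  rw [h]; erw [integral_fintype_prod_eq_prod (ι := Fin d) (E := fun _ => ℝ) (μ := fun _ => volume) (fun l t => if l = j then t else 1)]
  have h1 : (0:ℝ) < 1 - δ := by linarith [hδ.2]
  apply Finset.prod_eq_one
  intro l _
  rw [show (volume : Measure ℝ) = scaledBernoulli δ from rfl, sB_integral hδ]
  by_cases hl : l = j
  · simp only [hl, if_pos rfl, eq_self_iff_true, if_true]
    field_simp; ring
  · simp [hl]

lemma pi_moment2 {d : ℕ} {δ : ℝ} (hδ : δ ∈ Ioo (0:ℝ) 1) (j k : Fin d) :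
    ∫ ξ : Fin d → ℝ, ξ j * ξ k ∂(Measure.pi fun _ => scaledBernoulli δ)
      = if j = k then (1-δ)⁻¹ else 1 := by
  letI : MeasureSpace ℝ := ⟨scaledBernoulli δ⟩
  haveI : SigmaFinite (volume : Measure ℝ) :=
    @IsFiniteMeasure.toSigmaFinite _ _ _ (inferInstanceAs (IsFiniteMeasure (scaledBernoulli δ)))
  have hvol : (Measure.pi fun _ : Fin d => scaledBernoulli δ)
      = (volume : Measure (Fin d → ℝ)) := rfl
  rw [hvol]
  have h : (fun ξ : Fin d → ℝ => ξ j * ξ k)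
      = fun ξ => ∏ l, ((if l = j then ξ l else 1) * (if l = k then ξ l else 1)) := by
    funext ξ; rw [Finset.prod_mul_distrib, prod_if_rep, prod_if_rep]
  rw [h]; erw [integral_fintype_prod_eq_prod (ι := Fin d) (E := fun _ => ℝ) (μ := fun _ => volume)
    (fun l t => (if l = j then t else 1) * (if l = k then t else 1))]
  have h1 : (0:ℝ) < 1 - δ := by linarith [hδ.2]
  by_cases hjk : j = k
  · subst hjk
    rw [if_pos rfl, Finset.prod_eq_single j]
    · rw [show (volume : Measure ℝ) = scaledBernoulli δ from rfl, sB_integral hδ]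
      simp only [if_pos rfl, eq_self_iff_true, if_true]
      field_simp; ring
    · intro l _ hl
      rw [show (volume : Measure ℝ) = scaledBernoulli δ from rfl, sB_integral hδ]
      simp [hl]
    · simp
  · rw [if_neg hjk]
    apply Finset.prod_eq_one
    intro l _
    rw [show (volume : Measure ℝ) = scaledBernoulli δ from rfl, sB_integral hδ]
    by_cases hlj : l = j
    · subst hlj
      simp only [if_pos rfl, eq_self_iff_true, if_true, if_neg hjk, mul_one, mul_zero, zero_mul]
      field_simp; ring
    · by_cases hlk : l = k
      · subst hlk
        simp only [if_pos rfl, eq_self_iff_true, if_true, if_neg hlj, mul_one, mul_zero, one_mul]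
        field_simp; ring
      · simp [hlj, hlk]

lemma integral_sq {d : ℕ} {δ : ℝ} (hδ : δ ∈ Ioo (0:ℝ) 1) (a : Fin d → ℝ) (y : ℝ) :
    ∫ ξ : Fin d → ℝ, (∑ j, a j * ξ j - y)^2 ∂(Measure.pi fun _ => scaledBernoulli δ)
      = (∑ j, a j - y)^2 + (δ/(1-δ)) * ∑ j, (a j)^2 := by
  have h1 : (0:ℝ) < 1 - δ := by linarith [hδ.2]
  haveI : IsProbabilityMeasure (scaledBernoulli δ) := sB_prob hδ
  set μd := (Measure.pi fun _ : Fin d => scaledBernoulli δ) with hμd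
  haveI : IsProbabilityMeasure μd := by rw [hμd]; infer_instance
  have hI2 : ∀ j k : Fin d, Integrable (fun ξ : Fin d → ℝ => a j * a k * (ξ j * ξ k)) μd :=
    fun j k => ((pi_int2 j k).1).const_mul _
  have hI1 : ∀ j : Fin d, Integrable (fun ξ : Fin d → ℝ => a j * ξ j) μd :=
    fun j => ((pi_int2 j j).2).const_mul _
  have hf1 : Integrable (fun ξ : Fin d → ℝ => ∑ j, ∑ k, a j * a k * (ξ j * ξ k)) μd := by
    apply integrable_finset_sum
    intro j _
    exact integrable_finset_sum _ (fun k _ => hI2 j k)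
  have hf2 : Integrable (fun ξ : Fin d → ℝ => ∑ j, a j * ξ j) μd :=
    integrable_finset_sum _ (fun j _ => hI1 j)
  have hexp : (fun ξ : Fin d → ℝ => (∑ j, a j * ξ j - y)^2)
      = fun ξ => (∑ j, ∑ k, a j * a k * (ξ j * ξ k))
          + ((-(2*y)) * (∑ j, a j * ξ j) + y^2) := by
    funext ξ
    have hsq : (∑ j, a j * ξ j) * (∑ k, a k * ξ k) = ∑ j, ∑ k, a j * a k * (ξ j * ξ k) := by
      rw [Finset.sum_mul_sum]
      exact Finset.sum_congr rfl fun j _ => Finset.sum_congr rfl fun k _ => by ring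
    have : (∑ j, a j * ξ j - y)^2
        = (∑ j, a j * ξ j) * (∑ k, a k * ξ k) + ((-(2*y)) * (∑ j, a j * ξ j) + y^2) := by ring
    rw [this, hsq]
  rw [hexp, integral_add hf1 (by exact (hf2.const_mul _).add (integrable_const _)),
    integral_add (hf2.const_mul _) (integrable_const _),
    integral_finset_sum _ (fun j _ => integrable_finset_sum _ (fun k _ => hI2 j k)),
    integral_const]
  have hin : ∀ j : Fin d, ∫ ξ, (∑ k, a j * a k * (ξ j * ξ k)) ∂μd
      = ∑ k, a j * a k * (if j = k then (1-δ)⁻¹ else 1) := by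
    intro j
    rw [integral_finset_sum _ (fun k _ => hI2 j k)]
    exact Finset.sum_congr rfl fun k _ => by rw [integral_const_mul, pi_moment2 hδ]
  have hsum1 : (∑ j : Fin d, ∫ ξ, a j * ξ j ∂μd) = ∑ j, a j :=
    Finset.sum_congr rfl fun j _ => by rw [integral_const_mul, pi_moment1 hδ, mul_one]
  rw [Finset.sum_congr rfl (fun j _ => hin j), integral_const_mul,
    integral_finset_sum _ (fun j _ => hI1 j), hsum1]
  have key : ∀ j : Fin d, (∑ k, a j * a k * (if j = k then (1-δ)⁻¹ else 1))
      = (∑ k, a j * a k) + a j * a j * ((1-δ)⁻¹ - 1) := by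
    intro j
    have hterm : ∀ k : Fin d, a j * a k * (if j = k then (1-δ)⁻¹ else 1)
        = a j * a k + (if j = k then a j * a j * ((1-δ)⁻¹ - 1) else 0) := by
      intro k
      split_ifs with h
      · subst h; ring
      · ring
    simp_rw [hterm, Finset.sum_add_distrib, Finset.sum_ite_eq, if_pos (Finset.mem_univ j)]
  simp_rw [key, Finset.sum_add_distrib]
  have hss : ∑ j : Fin d, ∑ k : Fin d, a j * a k = (∑ j, a j) * (∑ j, a j) := by
    rw [Finset.sum_mul_sum]
  have hcd : (1-δ)⁻¹ - 1 = δ / (1-δ) := by field_simp; ring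
  rw [hss]
  simp only [probReal_univ, measure_univ, ENNReal.toReal_one, smul_eq_mul, one_mul]
  rw [← Finset.sum_mul, hcd]
  have hsq2 : ∑ j : Fin d, a j * a j = ∑ j, (a j)^2 :=
    Finset.sum_congr rfl fun j _ => (sq (a j)).symm
  rw [hsq2]
  ring

theorem dropout_empirical_objective_identity
    (n d : ℕ) (hn : 0 < n) (δ : ℝ) (hδ : δ ∈ Ioo (0 : ℝ) 1)
    (β : Fin d → ℝ) (x : Fin n → Fin d → ℝ) (y : Fin n → ℝ)
    (X : Matrix (Fin n) (Fin d) ℝ) (hX : X = Matrix.of x) (Y : Fin n → ℝ) (hY : Y = y) :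
    (1 / (n : ℝ)) * ∑ i, (∫ ξ, (∑ j, β j * (x i j * ξ j) - y i) ^ 2
        ∂(Measure.pi fun _ : Fin d => scaledBernoulli δ))
      = (1 / (n : ℝ)) *
        ((Y - X.mulVec β) ⬝ᵥ (Y - X.mulVec β) +
          (δ / (1 - δ)) * (β ⬝ᵥ (Matrix.diagonal fun j => (Xᵀ * X) j j).mulVec β)) := by
  rw [hX, hY]
  congr 1
  have hint : ∀ i : Fin n, (∫ ξ, (∑ j, β j * (x i j * ξ j) - y i) ^ 2
      ∂(Measure.pi fun _ : Fin d => scaledBernoulli δ))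
      = (∑ j, β j * x i j - y i)^2 + (δ/(1-δ)) * ∑ j, (β j * x i j)^2 := by
    intro i
    have := integral_sq hδ (fun j => β j * x i j) (y i)
    simpa [mul_assoc] using this
  rw [Finset.sum_congr rfl (fun i _ => hint i), Finset.sum_add_distrib]
  have hrhs1 : (y - (Matrix.of x).mulVec β) ⬝ᵥ (y - (Matrix.of x).mulVec β)
      = ∑ i, (∑ j, β j * x i j - y i)^2 := by
    simp only [dotProduct, Matrix.mulVec, Pi.sub_apply, Matrix.of_apply, dotProduct]
    refine Finset.sum_congr rfl fun i _ => ?_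
    have hs : ∑ j, x i j * β j = ∑ j, β j * x i j :=
      Finset.sum_congr rfl fun j _ => mul_comm _ _
    rw [hs]; ring
  have hrhs2 : β ⬝ᵥ (Matrix.diagonal fun j => ((Matrix.of x)ᵀ * Matrix.of x) j j).mulVec β
      = ∑ i, ∑ j, (β j * x i j)^2 := by
    simp only [dotProduct, Matrix.mulVec_diagonal, Matrix.mul_apply, Matrix.transpose_apply,
      Matrix.of_apply]
    rw [Finset.sum_comm]
    refine Finset.sum_congr rfl fun j _ => ?_
    rw [Finset.sum_mul, Finset.mul_sum]
    refine Finset.sum_congr rfl fun i _ => ?_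
    ring
  rw [hrhs1, hrhs2, Finset.mul_sum]
end

section
/- Let $K^*$ be a random variable on integers $\ge m_0$ with $\mathbb{P}(K^* = K) = r(1-r)^{K-m_0}$ where $r \in (1/2, 3/4)$. Suppose $(\bar\Delta_K)_{K\ge m_0}$ are random vectors in $\mathbb{R}^d$, independent of $K^*$, satisfying $\mathbb{E}[\|\bar\Delta_K\|_2^2] \le C\, 2^{-2K}$ for some constant $C$, and let $\theta_0$ be a bounded random vector with $\|\theta_0\|_2 \le M$ almost surely. Then the randomized estimator $Z = \bar\Delta_{K^*}/\mathbb{P}(K^*=K^*) + \theta_0$ (i.e., $Z = \bar\Delta_K/p(K) + \theta_0$ on the event $K^*=K$) satisfies $\mathbb{E}[\|Z\|_2^2] < \infty$. -/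
open MeasureTheory ProbabilityTheory

theorem randomized_mlmc_finite_second_moment
    (d m0 : ℕ) (r : ℝ) (hr : 1 / 2 < r) (hr' : r < 3 / 4)
    {Ω : Type*} [MeasurableSpace Ω] (μ : Measure Ω) [IsProbabilityMeasure μ]
    (Kstar : Ω → ℕ) (hKmeas : Measurable Kstar)
    (hKge : ∀ᵐ ω ∂μ, m0 ≤ Kstar ω)
    (hKlaw : ∀ K : ℕ, m0 ≤ K → μ {ω | Kstar ω = K} = ENNReal.ofReal (r * (1 - r) ^ (K - m0)))
    (Δ : ℕ → Ω → EuclideanSpace ℝ (Fin d))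
    (hΔmeas : ∀ K, Measurable (Δ K))
    (θ0 : Ω → EuclideanSpace ℝ (Fin d)) (hθmeas : Measurable θ0)
    (hindep : IndepFun Kstar (fun ω => (fun K => Δ K ω, θ0 ω)) μ)
    (C : ℝ) (hC : ∀ K : ℕ, (∫ ω, ‖Δ K ω‖ ^ 2 ∂μ) ≤ C * ((2 : ℝ) ^ K)⁻¹ ^ 2)
    (hΔint : ∀ K, Integrable (fun ω => ‖Δ K ω‖ ^ 2) μ)
    (M : ℝ) (hM : ∀ᵐ ω ∂μ, ‖θ0 ω‖ ≤ M)
    (Z : Ω → EuclideanSpace ℝ (Fin d))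
    (hZ : Z = fun ω => (r * (1 - r) ^ (Kstar ω - m0))⁻¹ • Δ (Kstar ω) ω + θ0 ω) :
    Integrable (fun ω => ‖Z ω‖ ^ 2) μ := by
  have hr0 : (0:ℝ) < r := by linarith
  have h1r : (0:ℝ) < 1 - r := by linarith
  set p : ℕ → ℝ := fun K => r * (1 - r) ^ (K - m0) with hp
  have hppos : ∀ K, 0 < p K := fun K => mul_pos hr0 (pow_pos h1r _)
  have hC0 : 0 ≤ C := by
    have h1 := hC 0
    have h2 : (0:ℝ) ≤ ∫ ω, ‖Δ 0 ω‖ ^ 2 ∂μ := integral_nonneg fun ω => by positivity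
    simpa using h2.trans h1
  -- measurability
  have hpair : Measurable fun q : Ω × ℕ => Δ q.2 q.1 :=
    measurable_from_prod_countable_left fun K => hΔmeas K
  have hΔK : Measurable fun ω => Δ (Kstar ω) ω :=
    hpair.comp (measurable_id.prodMk hKmeas)
  have hpK : Measurable fun ω => (p (Kstar ω))⁻¹ :=
    (measurable_from_top (f := fun K : ℕ => (p K)⁻¹)).comp hKmeas
  set f : Ω → EuclideanSpace ℝ (Fin d) := fun ω => (p (Kstar ω))⁻¹ • Δ (Kstar ω) ω with hf
  have hfmeas : Measurable f := hpK.smul hΔK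
  have hZmeas : Measurable Z := by rw [hZ]; exact hfmeas.add hθmeas
  set F : Ω → ENNReal := fun ω => ENNReal.ofReal (‖f ω‖ ^ 2) with hF
  have hFmeas : Measurable F := (hfmeas.norm.pow_const 2).ennreal_ofReal
  set G : ℕ → Ω → ENNReal := fun K ω => ENNReal.ofReal (((p K)⁻¹) ^ 2 * ‖Δ K ω‖ ^ 2) with hG
  have hGmeas : ∀ K, Measurable (G K) :=
    fun K => (measurable_const.mul ((hΔmeas K).norm.pow_const 2)).ennreal_ofReal
  have hSmeas : ∀ K : ℕ, MeasurableSet {ω | Kstar ω = K} :=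
    fun K => hKmeas (measurableSet_singleton K)
  -- constants
  set q : ℝ := ((4:ℝ) * (1 - r))⁻¹ with hq
  have hq0 : 0 < q := by positivity
  have hq1 : q < 1 := by
    rw [hq]
    rw [inv_lt_one_iff₀]
    right; linarith
  set D : ℝ := C * r⁻¹ * ((4:ℝ) ^ m0)⁻¹ with hD
  have hD0 : 0 ≤ D := by positivity
  set Q : ENNReal := ENNReal.ofReal q with hQ
  have hQ1 : Q < 1 := ENNReal.ofReal_lt_one.2 hq1
  have hQ0 : 0 < Q := ENNReal.ofReal_pos.2 hq0
  -- the main part: ∫⁻ F < ∞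
  have key : ∫⁻ ω, F ω ∂μ < ⊤ := by
    have hFeq : ∀ ω, F ω = ∑' K, Set.indicator {ω' | Kstar ω' = K} F ω := by
      intro ω
      rw [tsum_eq_single (Kstar ω)]
      · rw [Set.indicator_of_mem]; exact rfl
      · intro K hK
        exact Set.indicator_of_notMem (fun h => hK (h.symm)) F
    have hsplit : ∫⁻ ω, F ω ∂μ = ∑' K, ∫⁻ ω in {ω' | Kstar ω' = K}, F ω ∂μ := by
      calc ∫⁻ ω, F ω ∂μ = ∫⁻ ω, ∑' K, Set.indicator {ω' | Kstar ω' = K} F ω ∂μ :=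
            lintegral_congr hFeq
        _ = ∑' K, ∫⁻ ω, Set.indicator {ω' | Kstar ω' = K} F ω ∂μ :=
            lintegral_tsum fun K => (hFmeas.indicator (hSmeas K)).aemeasurable
        _ = ∑' K, ∫⁻ ω in {ω' | Kstar ω' = K}, F ω ∂μ := by
            refine tsum_congr fun K => ?_
            rw [lintegral_indicator (hSmeas K)]
    have hterm : ∀ K, ∫⁻ ω in {ω' | Kstar ω' = K}, F ω ∂μ
        = μ {ω' | Kstar ω' = K} * ∫⁻ ω, G K ω ∂μ := by
      intro K
      have hFG : ∫⁻ ω in {ω' | Kstar ω' = K}, F ω ∂μ = ∫⁻ ω in {ω' | Kstar ω' = K}, G K ω ∂μ := by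
        refine setLIntegral_congr_fun (hSmeas K) (fun ω hω => ?_)
        have hωK : Kstar ω = K := hω
        simp only [hF, hG, hf, hωK, norm_smul, mul_pow, norm_inv, Real.norm_eq_abs, sq_abs,
          abs_of_pos (hppos K), inv_pow]
      rw [hFG, ← lintegral_indicator (hSmeas K)]
      have hind : ∀ ω, Set.indicator {ω' | Kstar ω' = K} (G K) ω
          = ((fun n : ℕ => if n = K then (1:ENNReal) else 0) ∘ Kstar) ω * G K ω := by
        intro ω
        by_cases h : Kstar ω = K <;>
          simp [Set.indicator, h, Set.mem_setOf_eq]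
      rw [lintegral_congr hind]
      have hψ : Measurable fun v : (ℕ → EuclideanSpace ℝ (Fin d)) × EuclideanSpace ℝ (Fin d) =>
          ENNReal.ofReal (((p K)⁻¹) ^ 2 * ‖v.1 K‖ ^ 2) :=
        (measurable_const.mul ((((measurable_pi_apply K).comp measurable_fst).norm).pow_const 2)).ennreal_ofReal
      have hindep2 : IndepFun ((fun n : ℕ => if n = K then (1:ENNReal) else 0) ∘ Kstar)
          ((fun v : (ℕ → EuclideanSpace ℝ (Fin d)) × EuclideanSpace ℝ (Fin d) =>
            ENNReal.ofReal (((p K)⁻¹) ^ 2 * ‖v.1 K‖ ^ 2)) ∘ (fun ω => (fun K => Δ K ω, θ0 ω))) μ :=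
        hindep.comp measurable_from_top hψ
      have := lintegral_mul_eq_lintegral_mul_lintegral_of_indepFun
        (measurable_from_top.comp hKmeas) (hψ.comp (by
          exact (measurable_pi_lambda _ fun K' => hΔmeas K').prodMk hθmeas)) hindep2
      rw [show (fun ω => ((fun n : ℕ => if n = K then (1:ENNReal) else 0) ∘ Kstar) ω * G K ω)
          = ((fun n : ℕ => if n = K then (1:ENNReal) else 0) ∘ Kstar) *
            ((fun v : (ℕ → EuclideanSpace ℝ (Fin d)) × EuclideanSpace ℝ (Fin d) =>
              ENNReal.ofReal (((p K)⁻¹) ^ 2 * ‖v.1 K‖ ^ 2)) ∘ (fun ω => (fun K => Δ K ω, θ0 ω)))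
          from rfl, this]
      congr 1
      · rw [← lintegral_indicator_one (hSmeas K)]
        refine lintegral_congr fun ω => ?_
        by_cases h : Kstar ω = K <;> simp [Set.indicator, h, Set.mem_setOf_eq]
    have hbound : ∀ K, μ {ω' | Kstar ω' = K} * ∫⁻ ω, G K ω ∂μ
        ≤ ENNReal.ofReal D * Q ^ (K - m0) := by
      intro K
      rcases le_or_gt m0 K with hK | hK
      · obtain ⟨j, rfl⟩ := Nat.exists_eq_add_of_le hK
        have hjj : m0 + j - m0 = j := by omega
        have hIint : (0:ℝ) ≤ ∫ ω, ‖Δ (m0 + j) ω‖ ^ 2 ∂μ := integral_nonneg fun ω => by positivity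
        have hGint : ∫⁻ ω, G (m0 + j) ω ∂μ
            = ENNReal.ofReal (((p (m0+j))⁻¹) ^ 2) * ENNReal.ofReal (∫ ω, ‖Δ (m0 + j) ω‖ ^ 2 ∂μ) := by
          have : ∀ ω, G (m0+j) ω = ENNReal.ofReal (((p (m0+j))⁻¹) ^ 2)
              * ENNReal.ofReal (‖Δ (m0+j) ω‖ ^ 2) := fun ω => by
            rw [hG]; exact ENNReal.ofReal_mul (by positivity)
          rw [lintegral_congr this,
            lintegral_const_mul _ ((hΔmeas (m0+j)).norm.pow_const 2).ennreal_ofReal,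
            ofReal_integral_eq_lintegral_ofReal (hΔint (m0+j))
              (ae_of_all μ fun ω => by positivity)]
        rw [hKlaw _ hK, hGint, hjj]
        have hpeq : p (m0+j) = r * (1 - r) ^ j := by
          rw [hp]; simp
        rw [← hpeq,
          ← ENNReal.ofReal_mul (by positivity : (0:ℝ) ≤ (p (m0+j))⁻¹ ^ 2),
          ← ENNReal.ofReal_mul (hppos (m0+j)).le,
          ← ENNReal.ofReal_pow hq0.le,
          ← ENNReal.ofReal_mul hD0]
        refine ENNReal.ofReal_le_ofReal ?_
        have hle := hC (m0 + j)
        have hr'' : r ≠ 0 := ne_of_gt hr0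
        have h1r' : (1 - r) ≠ 0 := ne_of_gt h1r
        have h1rj : ((1 - r):ℝ) ^ j ≠ 0 := pow_ne_zero _ h1r'
        have h2m : ((2:ℝ) ^ m0) ≠ 0 := by positivity
        have h2j : ((2:ℝ) ^ j) ≠ 0 := by positivity
        have key2 : p (m0+j) * ((p (m0+j))⁻¹ ^ 2 * (C * ((2:ℝ) ^ (m0+j))⁻¹ ^ 2)) = D * q ^ j := by
          rw [hpeq, hD, hq, pow_add]
          rw [show (4:ℝ) ^ m0 = ((2:ℝ) ^ m0) ^ 2 by
            rw [show (4:ℝ) = 2 ^ 2 by norm_num, ← pow_mul, ← pow_mul, mul_comm]]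
          rw [show ((4:ℝ) * (1 - r))⁻¹ ^ j = (((2:ℝ) ^ j) ^ 2)⁻¹ * (((1:ℝ) - r) ^ j)⁻¹ by
            rw [mul_inv, mul_pow, ← inv_pow, ← inv_pow, ← inv_pow]
            congr 1
            rw [show (4:ℝ)⁻¹ = (2⁻¹ : ℝ) ^ 2 by norm_num, ← pow_mul, ← pow_mul, mul_comm]]
          field_simp
        calc p (m0+j) * ((p (m0+j))⁻¹ ^ 2 * ∫ ω, ‖Δ (m0 + j) ω‖ ^ 2 ∂μ)
            ≤ p (m0+j) * ((p (m0+j))⁻¹ ^ 2 * (C * ((2:ℝ) ^ (m0+j))⁻¹ ^ 2)) := by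
              gcongr
          _ = D * q ^ j := key2
      · have hnull : μ {ω' | Kstar ω' = K} = 0 := by
          refine measure_mono_null (fun ω hω => ?_) (ae_iff.mp hKge)
          simp only [Set.mem_setOf_eq] at hω ⊢
          omega
        rw [hnull, zero_mul]
        exact zero_le
    have hgeom : ∑' K : ℕ, ENNReal.ofReal D * Q ^ (K - m0) < ⊤ := by
      have hQm0 : Q ^ m0 ≠ 0 := pow_ne_zero m0 hQ0.ne'
      have hQm0' : Q ^ m0 ≠ ⊤ := (ENNReal.pow_lt_top (lt_of_lt_of_le hQ1 le_top)).ne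
      have hterm2 : ∀ K : ℕ, Q ^ (K - m0) ≤ Q ^ K * (Q ^ m0)⁻¹ := by
        intro K
        have h1 : Q ^ (K - m0) * Q ^ m0 ≤ Q ^ K := by
          rw [← pow_add]
          exact pow_le_pow_right_of_le_one' hQ1.le (by omega)
        calc Q ^ (K - m0) = Q ^ (K - m0) * Q ^ m0 * (Q ^ m0)⁻¹ := by
              rw [mul_assoc, ENNReal.mul_inv_cancel hQm0 hQm0', mul_one]
          _ ≤ Q ^ K * (Q ^ m0)⁻¹ := mul_le_mul_left h1 _
      calc ∑' K : ℕ, ENNReal.ofReal D * Q ^ (K - m0)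
          ≤ ∑' K : ℕ, ENNReal.ofReal D * (Q ^ K * (Q ^ m0)⁻¹) :=
            ENNReal.tsum_le_tsum fun K => mul_le_mul_right (hterm2 K) _
        _ = ENNReal.ofReal D * ((1 - Q)⁻¹ * (Q ^ m0)⁻¹) := by
            rw [ENNReal.tsum_mul_left, ENNReal.tsum_mul_right, ENNReal.tsum_geometric]
        _ < ⊤ := by
            apply ENNReal.mul_lt_top ENNReal.ofReal_lt_top
            apply ENNReal.mul_lt_top
            · exact ENNReal.inv_lt_top.2 (tsub_pos_of_lt hQ1)
            · exact ENNReal.inv_lt_top.2 (pos_iff_ne_zero.2 (pow_ne_zero m0 hQ0.ne'))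
    calc ∫⁻ ω, F ω ∂μ = ∑' K, ∫⁻ ω in {ω' | Kstar ω' = K}, F ω ∂μ := hsplit
      _ ≤ ∑' K : ℕ, ENNReal.ofReal D * Q ^ (K - m0) := by
          refine ENNReal.tsum_le_tsum fun K => ?_
          rw [hterm K]
          exact hbound K
      _ < ⊤ := hgeom
  -- bounded part
  have hθ : ∫⁻ ω, ENNReal.ofReal (‖θ0 ω‖ ^ 2) ∂μ < ⊤ := by
    have hb : ∀ᵐ ω ∂μ, ENNReal.ofReal (‖θ0 ω‖ ^ 2) ≤ ENNReal.ofReal (M ^ 2) := by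
      filter_upwards [hM] with ω hω
      exact ENNReal.ofReal_le_ofReal (by nlinarith [norm_nonneg (θ0 ω)])
    calc ∫⁻ ω, ENNReal.ofReal (‖θ0 ω‖ ^ 2) ∂μ ≤ ∫⁻ _, ENNReal.ofReal (M ^ 2) ∂μ :=
          lintegral_mono_ae hb
      _ = ENNReal.ofReal (M ^ 2) := by simp
      _ < ⊤ := ENNReal.ofReal_lt_top
  -- combine
  refine ⟨(hZmeas.norm.pow_const 2).aestronglyMeasurable, ?_⟩
  rw [hasFiniteIntegral_iff_ofReal (ae_of_all μ fun ω => by positivity)]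
  have hptw : ∀ ω, ENNReal.ofReal (‖Z ω‖ ^ 2) ≤
      2 * F ω + 2 * ENNReal.ofReal (‖θ0 ω‖ ^ 2) := by
    intro ω
    have h2 : ‖Z ω‖ ≤ ‖f ω‖ + ‖θ0 ω‖ := by
      rw [hZ]; exact norm_add_le _ _
    have h1 : ‖Z ω‖ ^ 2 ≤ 2 * ‖f ω‖ ^ 2 + 2 * ‖θ0 ω‖ ^ 2 := by
      nlinarith [norm_nonneg (Z ω), norm_nonneg (f ω), norm_nonneg (θ0 ω),
        sq_nonneg (‖f ω‖ - ‖θ0 ω‖)]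
    calc ENNReal.ofReal (‖Z ω‖ ^ 2) ≤ ENNReal.ofReal (2 * ‖f ω‖ ^ 2 + 2 * ‖θ0 ω‖ ^ 2) :=
          ENNReal.ofReal_le_ofReal h1
      _ ≤ ENNReal.ofReal (2 * ‖f ω‖ ^ 2) + ENNReal.ofReal (2 * ‖θ0 ω‖ ^ 2) :=
          ENNReal.ofReal_add_le
      _ = 2 * F ω + 2 * ENNReal.ofReal (‖θ0 ω‖ ^ 2) := by
          rw [ENNReal.ofReal_mul (by norm_num), ENNReal.ofReal_mul (by norm_num)]
          norm_num [hF]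
  calc ∫⁻ ω, ENNReal.ofReal (‖Z ω‖ ^ 2) ∂μ
      ≤ ∫⁻ ω, (2 * F ω + 2 * ENNReal.ofReal (‖θ0 ω‖ ^ 2)) ∂μ := lintegral_mono hptw
    _ = 2 * ∫⁻ ω, F ω ∂μ + 2 * ∫⁻ ω, ENNReal.ofReal (‖θ0 ω‖ ^ 2) ∂μ := by
        rw [lintegral_add_left (hFmeas.const_mul 2), lintegral_const_mul 2 hFmeas,
          lintegral_const_mul 2 (hθmeas.norm.pow_const 2).ennreal_ofReal]
    _ < ⊤ := by
        apply ENNReal.add_lt_top.2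
        refine ⟨ENNReal.mul_lt_top (by norm_num) key, ENNReal.mul_lt_top (by norm_num) hθ⟩
end
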